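/- If n ≡ 0 (mod 3), then the path P_n has exactly one minimum-weight Roman dominating function, namely the one assigning 2 to each vertex x_i with i ≡ 1 (mod 3) and 0 to all other vertices (vertices indexed x_0,…,x_{n−1}). -/

import Mathlib

def IsRDF {V : Type*} (G : SimpleGraph V) (f : V → ℕ) : Prop :=
  (∀ v, f v ≤ 2) ∧ ∀ v, f v = 0 → ∃ u, G.Adj v u ∧ f u = 2

noncomputable def gammaR {V : Type*} [Fintype V] (G : SimpleGraph V) : ℕ :=
  sInf {w | ∃ f, IsRDF G f ∧ ∑ v, f v = w}

def IsMinRDF {V : Type*} [Fintype V] (G : SimpleGraph V) (f : V → ℕ) : Prop :=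
  IsRDF G f ∧ ∑ v, f v = gammaR G

noncomputable instance myInstSetFintype {V : Type*} [Fintype V] (s : Set V) : Fintype s :=
  s.toFinite.fintype

open Finset SimpleGraph

/-- the pattern function -/
private def pat (n : ℕ) : Fin n → ℕ := fun i => if (i : ℕ) % 3 = 1 then 2 else 0

private lemma sum_range_pat (m : ℕ) :
    ∑ i ∈ Finset.range (3 * m), (if i % 3 = 1 then 2 else 0) = 2 * m := by
  induction m with
  | zero => simp
  | succ m ih =>
    have h3 : 3 * (m + 1) = (3 * m + 1) + 1 + 1 := by ring
    rw [h3, Finset.sum_range_succ, Finset.sum_range_succ, Finset.sum_range_succ, ih]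
    have h0 : 3 * m % 3 = 0 := by omega
    have h1 : (3 * m + 1) % 3 = 1 := by omega
    have h2 : (3 * m + 1 + 1) % 3 = 2 := by omega
    rw [h0, h1, h2]
    norm_num
    ring

private lemma sum_pat (n : ℕ) (hn : n % 3 = 0) : ∑ i, pat n i = 2 * (n / 3) := by
  have h : 3 * (n / 3) = n := by omega
  have h2 := sum_range_pat (n / 3)
  rw [h] at h2
  calc ∑ i, pat n i = ∑ i ∈ Finset.range n, (if i % 3 = 1 then 2 else 0) :=
        Fin.sum_univ_eq_sum_range (fun j => if j % 3 = 1 then 2 else 0) n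
    _ = 2 * (n / 3) := h2

private lemma pat_rdf (n : ℕ) (hn : n % 3 = 0) : IsRDF (SimpleGraph.pathGraph n) (pat n) := by
  constructor
  · intro v; unfold pat; split <;> omega
  · intro v hv
    unfold pat at hv
    have hv3 : (v : ℕ) % 3 ≠ 1 := by by_contra hc; rw [if_pos hc] at hv; omega
    have hvn : (v : ℕ) < n := v.isLt
    rcases Nat.lt_or_ge ((v : ℕ) % 3) 1 with h | h
    · -- v % 3 = 0, use v+1
      have h0 : (v : ℕ) % 3 = 0 := by omega
      have hlt : (v : ℕ) + 1 < n := by omega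
      refine ⟨⟨(v : ℕ) + 1, hlt⟩, ?_, ?_⟩
      · rw [SimpleGraph.pathGraph_adj]; left; simp
      · unfold pat; simp only []
        have : ((v : ℕ) + 1) % 3 = 1 := by omega
        simp [this]
    · -- v % 3 = 2, use v-1
      have h2 : (v : ℕ) % 3 = 2 := by omega
      have hpos : 1 ≤ (v : ℕ) := by omega
      refine ⟨⟨(v : ℕ) - 1, by omega⟩, ?_, ?_⟩
      · rw [SimpleGraph.pathGraph_adj]; right; simp; omega
      · unfold pat
        have : ((v : ℕ) - 1) % 3 = 1 := by omega
        simp [this]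

private lemma rdf_struct {n : ℕ} (f : Fin n → ℕ) (hf : IsRDF (SimpleGraph.pathGraph n) f) :
    2 * n ≤ 3 * ∑ v, f v ∧
    (3 * ∑ v, f v = 2 * n →
      (∀ v, f v ≠ 1) ∧
      (∀ v u u', f v = 0 → (SimpleGraph.pathGraph n).Adj v u → f u = 2 →
        (SimpleGraph.pathGraph n).Adj v u' → f u' = 2 → u = u') ∧
      (∀ u : Fin n, f u = 2 →
        (∃ a : Fin n, (a : ℕ) + 1 = (u : ℕ) ∧ f a = 0) ∧
        (∃ b : Fin n, (u : ℕ) + 1 = (b : ℕ) ∧ f b = 0))) := by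
  classical
  set V0 : Finset (Fin n) := Finset.univ.filter (fun v => f v = 0) with hV0
  set V1 : Finset (Fin n) := Finset.univ.filter (fun v => f v = 1) with hV1
  set V2 : Finset (Fin n) := Finset.univ.filter (fun v => f v = 2) with hV2
  set E : Finset (Fin n × Fin n) :=
    Finset.univ.filter (fun p => f p.1 = 0 ∧ f p.2 = 2 ∧ (SimpleGraph.pathGraph n).Adj p.1 p.2)
      with hE
  -- choice function
  have hgex : ∀ v : Fin n, f v = 0 →
      ∃ u, (SimpleGraph.pathGraph n).Adj v u ∧ f u = 2 := hf.2
  set g : Fin n → Fin n × Fin n :=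
    fun v => if h : f v = 0 then (v, (hgex v h).choose) else (v, v) with hgdef
  have hg1 : ∀ v, (g v).1 = v := by
    intro v; by_cases h : f v = 0 <;> simp [hgdef, h]
  have hgE : ∀ v, f v = 0 → g v ∈ E := by
    intro v hv
    have hspec := (hgex v hv).choose_spec
    rw [hgdef]
    simp only [dif_pos hv, hE, Finset.mem_filter, Finset.mem_univ, true_and]
    exact ⟨hv, hspec.2, hspec.1⟩
  -- vertex count
  have hcard1 : V0.card + V1.card + V2.card = n := by
    have hpt : ∀ v : Fin n,
        ((if f v = 0 then 1 else 0) + (if f v = 1 then 1 else 0) + (if f v = 2 then 1 else 0))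
          = (1 : ℕ) := by
      intro v
      have h2 := hf.1 v
      interval_cases h : f v <;> simp
    calc V0.card + V1.card + V2.card
        = ∑ v : Fin n, ((if f v = 0 then 1 else 0) + (if f v = 1 then 1 else 0)
            + (if f v = 2 then 1 else 0)) := by
          rw [Finset.sum_add_distrib, Finset.sum_add_distrib, hV0, hV1, hV2,
            Finset.card_filter, Finset.card_filter, Finset.card_filter]
      _ = ∑ _v : Fin n, (1 : ℕ) := Finset.sum_congr rfl (fun v _ => hpt v)
      _ = n := by simp
  -- weight count
  have hsum : ∑ v, f v = V1.card + 2 * V2.card := by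
    have hpt : ∀ v : Fin n,
        f v = (if f v = 1 then 1 else 0) + 2 * (if f v = 2 then 1 else 0) := by
      intro v
      have h2 := hf.1 v
      interval_cases h : f v <;> simp
    calc ∑ v, f v
        = ∑ v : Fin n, ((if f v = 1 then 1 else 0) + 2 * (if f v = 2 then 1 else 0)) :=
          Finset.sum_congr rfl (fun v _ => hpt v)
      _ = V1.card + 2 * V2.card := by
          rw [Finset.sum_add_distrib, ← Finset.mul_sum, hV1, hV2,
            Finset.card_filter, Finset.card_filter]
  -- V0.card ≤ E.card
  have h03 : V0.card ≤ E.card := by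
    apply Finset.card_le_card_of_injOn g
    · intro v hv
      rw [Finset.mem_coe, hV0, Finset.mem_filter] at hv
      exact hgE v hv.2
    · intro a _ b _ hab
      have : (g a).1 = (g b).1 := by rw [hab]
      rwa [hg1, hg1] at this
  -- fibers
  have hfib : E.card = ∑ u ∈ V2, (E.filter (fun p => p.2 = u)).card :=
    Finset.card_eq_sum_card_fiberwise
    (f := fun p : Fin n × Fin n => p.2) (s := E) (t := V2)
    (by
      intro p hp
      rw [Finset.mem_coe, hE, Finset.mem_filter] at hp
      rw [Finset.mem_coe, hV2, Finset.mem_filter]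
      exact ⟨Finset.mem_univ _, hp.2.2.1⟩)
  have hfible : ∀ u ∈ V2, (E.filter (fun p => p.2 = u)).card ≤ 2 := by
    intro u _
    have hinj : Set.InjOn (fun p : Fin n × Fin n => decide ((p.1 : ℕ) + 1 = (u : ℕ)))
        (E.filter (fun p => p.2 = u)) := by
      intro p hp q hq hpq
      simp only [Finset.coe_filter, Set.mem_setOf_eq, hE, Finset.mem_filter] at hp hq
      have hadp := hp.1.2.2.2
      have hadq := hq.1.2.2.2
      rw [hp.2] at hadp
      rw [hq.2] at hadq
      rw [SimpleGraph.pathGraph_adj] at hadp hadq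
      have hiff : ((p.1 : ℕ) + 1 = (u : ℕ)) ↔ ((q.1 : ℕ) + 1 = (u : ℕ)) := by
        constructor <;> intro h
        · have := hpq; rw [decide_eq_decide] at this; exact this.mp h
        · have := hpq; rw [decide_eq_decide] at this; exact this.mpr h
      have hfst : p.1 = q.1 := by
        by_cases hc : (p.1 : ℕ) + 1 = (u : ℕ)
        · have hc' := hiff.mp hc
          exact Fin.ext (by omega)
        · have hc' : ¬ ((q.1 : ℕ) + 1 = (u : ℕ)) := fun h => hc (hiff.mpr h)
          have h1 : (u : ℕ) + 1 = (p.1 : ℕ) := by tauto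
          have h2 : (u : ℕ) + 1 = (q.1 : ℕ) := by tauto
          exact Fin.ext (by omega)
      exact Prod.ext hfst (hp.2.trans hq.2.symm)
    have := Finset.card_le_card_of_injOn
      (fun p : Fin n × Fin n => decide ((p.1 : ℕ) + 1 = (u : ℕ)))
      (fun p _ => Finset.mem_univ _) hinj
    simpa using this
  have h4 : E.card ≤ 2 * V2.card := by
    rw [hfib]
    calc ∑ u ∈ V2, (E.filter (fun p => p.2 = u)).card ≤ ∑ _u ∈ V2, 2 :=
          Finset.sum_le_sum hfible
      _ = 2 * V2.card := by rw [Finset.sum_const]; ring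
  constructor
  · omega
  intro heq
  have hv1 : V1.card = 0 := by omega
  have hEeq : V0.card = E.card := by omega
  have hE2 : E.card = 2 * V2.card := by omega
  have hA : ∀ v, f v ≠ 1 := by
    intro v hv
    have : v ∈ V1 := by rw [hV1, Finset.mem_filter]; exact ⟨Finset.mem_univ _, hv⟩
    rw [Finset.card_eq_zero] at hv1
    rw [hv1] at this
    exact absurd this (Finset.notMem_empty v)
  refine ⟨hA, ?_, ?_⟩
  · -- uniqueness of the 2-neighbor
    have himg : V0.image g = E := by
      apply Finset.eq_of_subset_of_card_le
      · intro p hp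
        rw [Finset.mem_image] at hp
        obtain ⟨v, hv, rfl⟩ := hp
        rw [hV0, Finset.mem_filter] at hv
        exact hgE v hv.2
      · rw [Finset.card_image_of_injOn]
        · omega
        · intro a _ b _ hab
          have : (g a).1 = (g b).1 := by rw [hab]
          rwa [hg1, hg1] at this
    intro v u u' hv hadj hu hadj' hu'
    have hm1 : (v, u) ∈ E := by
      rw [hE, Finset.mem_filter]; exact ⟨Finset.mem_univ _, hv, hu, hadj⟩
    have hm2 : (v, u') ∈ E := by
      rw [hE, Finset.mem_filter]; exact ⟨Finset.mem_univ _, hv, hu', hadj'⟩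
    rw [← himg, Finset.mem_image] at hm1 hm2
    obtain ⟨w1, _, hw1⟩ := hm1
    obtain ⟨w2, _, hw2⟩ := hm2
    have hw1v : w1 = v := by have h := hg1 w1; rw [hw1] at h; exact h.symm
    have hw2v : w2 = v := by have h := hg1 w2; rw [hw2] at h; exact h.symm
    rw [hw1v] at hw1; rw [hw2v] at hw2
    have : (g v).2 = u := by rw [hw1]
    have h2 : (g v).2 = u' := by rw [hw2]
    rw [this] at h2; exact h2
  · -- every 2-vertex has both neighbors labeled 0
    have heach : ∀ w ∈ V2, (E.filter (fun p => p.2 = w)).card = 2 := by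
      by_contra hc
      push_neg at hc
      obtain ⟨w, hw, hwne⟩ := hc
      have hlt : (E.filter (fun p => p.2 = w)).card < 2 :=
        lt_of_le_of_ne (hfible w hw) hwne
      have : ∑ u ∈ V2, (E.filter (fun p => p.2 = u)).card < ∑ _u ∈ V2, 2 :=
        Finset.sum_lt_sum hfible ⟨w, hw, hlt⟩
      rw [Finset.sum_const, smul_eq_mul] at this
      omega
    intro u hu
    have huV2 : u ∈ V2 := by rw [hV2, Finset.mem_filter]; exact ⟨Finset.mem_univ _, hu⟩
    have hcard2 := heach u huV2
    -- image of fiber under boolean map is all of Bool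
    have hinj : Set.InjOn (fun p : Fin n × Fin n => decide ((p.1 : ℕ) + 1 = (u : ℕ)))
        (E.filter (fun p => p.2 = u)) := by
      intro p hp q hq hpq
      simp only [Finset.coe_filter, Set.mem_setOf_eq, hE, Finset.mem_filter] at hp hq
      have hadp := hp.1.2.2.2
      have hadq := hq.1.2.2.2
      rw [hp.2] at hadp
      rw [hq.2] at hadq
      rw [SimpleGraph.pathGraph_adj] at hadp hadq
      have hiff : ((p.1 : ℕ) + 1 = (u : ℕ)) ↔ ((q.1 : ℕ) + 1 = (u : ℕ)) := by
        rw [← decide_eq_decide]; exact hpq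
      have hfst : p.1 = q.1 := by
        by_cases hc : (p.1 : ℕ) + 1 = (u : ℕ)
        · have hc' := hiff.mp hc
          exact Fin.ext (by omega)
        · have hc' : ¬ ((q.1 : ℕ) + 1 = (u : ℕ)) := fun h => hc (hiff.mpr h)
          have h1 : (u : ℕ) + 1 = (p.1 : ℕ) := by tauto
          have h2 : (u : ℕ) + 1 = (q.1 : ℕ) := by tauto
          exact Fin.ext (by omega)
      exact Prod.ext hfst (hp.2.trans hq.2.symm)
    have himg : (E.filter (fun p => p.2 = u)).image
        (fun p : Fin n × Fin n => decide ((p.1 : ℕ) + 1 = (u : ℕ))) = Finset.univ := by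
      apply Finset.eq_of_subset_of_card_le (Finset.subset_univ _)
      rw [Finset.card_image_of_injOn hinj, hcard2]
      simp
    have htrue : (true : Bool) ∈ (E.filter (fun p => p.2 = u)).image
        (fun p : Fin n × Fin n => decide ((p.1 : ℕ) + 1 = (u : ℕ))) := by
      rw [himg]; exact Finset.mem_univ _
    have hfalse : (false : Bool) ∈ (E.filter (fun p => p.2 = u)).image
        (fun p : Fin n × Fin n => decide ((p.1 : ℕ) + 1 = (u : ℕ))) := by
      rw [himg]; exact Finset.mem_univ _
    rw [Finset.mem_image] at htrue hfalse
    obtain ⟨p, hp, hpd⟩ := htrue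
    obtain ⟨q, hq, hqd⟩ := hfalse
    simp only [hE, Finset.mem_filter] at hp hq
    constructor
    · refine ⟨p.1, ?_, hp.1.2.1⟩
      have := of_decide_eq_true hpd
      exact this
    · refine ⟨q.1, ?_, hq.1.2.1⟩
      have hnd : ¬ ((q.1 : ℕ) + 1 = (u : ℕ)) := of_decide_eq_false hqd
      have hadq := hq.1.2.2.2
      rw [hq.2] at hadq
      rw [SimpleGraph.pathGraph_adj] at hadq
      omega

private lemma vals {n : ℕ} (hn : n % 3 = 0) (f : Fin n → ℕ)
    (hf : IsRDF (SimpleGraph.pathGraph n) f)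
    (hA : ∀ v, f v ≠ 1)
    (hB : ∀ v u u', f v = 0 → (SimpleGraph.pathGraph n).Adj v u → f u = 2 →
        (SimpleGraph.pathGraph n).Adj v u' → f u' = 2 → u = u')
    (hC : ∀ u : Fin n, f u = 2 →
        (∃ a : Fin n, (a : ℕ) + 1 = (u : ℕ) ∧ f a = 0) ∧
        (∃ b : Fin n, (u : ℕ) + 1 = (b : ℕ) ∧ f b = 0)) :
    ∀ j : Fin n, f j = pat n j := by
  have h02 : ∀ v : Fin n, f v = 0 ∨ f v = 2 := by
    intro v; have := hf.1 v; have := hA v; omega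
  have key : ∀ m : ℕ, ∀ j : Fin n, (j : ℕ) = m → f j = pat n j := by
    intro m
    induction m using Nat.strong_induction_on with
    | _ m ih =>
      intro j hj
      have hjn : (j : ℕ) < n := j.isLt
      unfold pat
      rcases Nat.lt_or_ge ((j : ℕ) % 3) 1 with hm | hm'
      · -- j % 3 = 0 : show f j = 0
        have hmod : (j : ℕ) % 3 = 0 := by omega
        rw [if_neg (by omega)]
        rcases h02 j with h' | h'
        · exact h'
        exfalso
        obtain ⟨⟨a, ha, ha0⟩, _⟩ := hC j h'
        -- a = j - 1, so j ≥ 1, hence j ≥ 3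
        have hj3 : 3 ≤ (j : ℕ) := by omega
        -- j - 2 has value 2 by IH
        set p : Fin n := ⟨(j : ℕ) - 2, by omega⟩ with hp
        have hplt : (p : ℕ) < m := by rw [hp]; simp; omega
        have hpf := ih (p : ℕ) (by omega) p rfl
        unfold pat at hpf
        have hpmod : (p : ℕ) % 3 = 1 := by rw [hp]; simp; omega
        rw [if_pos hpmod] at hpf
        -- a is adjacent to both p and j, f a = 0, f p = f j = 2, p ≠ j
        have hadj1 : (SimpleGraph.pathGraph n).Adj a p := by
          rw [SimpleGraph.pathGraph_adj]
          right
          rw [hp]; simp; omega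
        have hadj2 : (SimpleGraph.pathGraph n).Adj a j := by
          rw [SimpleGraph.pathGraph_adj]
          left; omega
        have := hB a p j ha0 hadj1 hpf hadj2 h'
        have : (p : ℕ) = (j : ℕ) := by rw [this]
        rw [hp] at this; simp at this; omega
      rcases Nat.lt_or_ge ((j : ℕ) % 3) 2 with hm | hm''
      · -- j % 3 = 1 : show f j = 2
        have hmod : (j : ℕ) % 3 = 1 := by omega
        rw [if_pos hmod]
        -- f (j-1) = 0 by IH
        set p : Fin n := ⟨(j : ℕ) - 1, by omega⟩ with hp
        have hpf := ih (p : ℕ) (by rw [hp]; simp; omega) p rfl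
        unfold pat at hpf
        have hpmod : (p : ℕ) % 3 = 0 := by rw [hp]; simp; omega
        rw [if_neg (by omega)] at hpf
        obtain ⟨u, hadj, hu⟩ := hf.2 p hpf
        rw [SimpleGraph.pathGraph_adj] at hadj
        have hpv : (p : ℕ) = (j : ℕ) - 1 := by rw [hp]
        rcases hadj with hl | hr
        · have huval : (u : ℕ) = (j : ℕ) := by omega
          have : u = j := Fin.ext huval
          rw [← this]; exact hu
        · -- u + 1 = p means u = j - 2, impossible since f (j-2) = 0
          exfalso
          have hj2 : 2 ≤ (j : ℕ) := by omega
          have huval : (u : ℕ) = (j : ℕ) - 2 := by omega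
          have huf := ih (u : ℕ) (by omega) u rfl
          unfold pat at huf
          have : (u : ℕ) % 3 = 2 := by omega
          rw [if_neg (by omega)] at huf
          omega
      · -- j % 3 = 2 : show f j = 0
        have hmod : (j : ℕ) % 3 = 2 := by omega
        rw [if_neg (by omega)]
        rcases h02 j with h' | h'
        · exact h'
        exfalso
        set p : Fin n := ⟨(j : ℕ) - 1, by omega⟩ with hp
        have hpf := ih (p : ℕ) (by rw [hp]; simp; omega) p rfl
        unfold pat at hpf
        have hpmod : (p : ℕ) % 3 = 1 := by rw [hp]; simp; omega
        rw [if_pos hpmod] at hpf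
        obtain ⟨⟨a, ha, ha0⟩, _⟩ := hC j h'
        have hav : (a : ℕ) = (j : ℕ) - 1 := by omega
        have : a = p := Fin.ext (by rw [hp]; simp; omega)
        rw [this, hpf] at ha0
        omega
  intro j
  exact key (j : ℕ) j rfl

private lemma gamma_eq (n : ℕ) (hn : n % 3 = 0) :
    gammaR (SimpleGraph.pathGraph n) = 2 * (n / 3) := by
  have hmem : 2 * (n / 3) ∈
      {w | ∃ f, IsRDF (SimpleGraph.pathGraph n) f ∧ ∑ v, f v = w} :=
    ⟨pat n, pat_rdf n hn, sum_pat n hn⟩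
  unfold gammaR
  apply Nat.le_antisymm
  · exact Nat.sInf_le hmem
  · apply le_csInf ⟨_, hmem⟩
    rintro w ⟨f, hf, rfl⟩
    have := (rdf_struct f hf).1
    omega

theorem path_unique_minRDF (n : ℕ) (hn : n % 3 = 0) :
    IsMinRDF (SimpleGraph.pathGraph n)
      (fun i : Fin n => if (i : ℕ) % 3 = 1 then 2 else 0) ∧
    ∀ f, IsMinRDF (SimpleGraph.pathGraph n) f →
      f = (fun i : Fin n => if (i : ℕ) % 3 = 1 then 2 else 0) := by
  constructor
  · exact ⟨pat_rdf n hn, (sum_pat n hn).trans (gamma_eq n hn).symm⟩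
  · intro f hf
    have hw : ∑ v, f v = 2 * (n / 3) := hf.2.trans (gamma_eq n hn)
    have heq : 3 * ∑ v, f v = 2 * n := by omega
    obtain ⟨hA, hB, hC⟩ := (rdf_struct f hf.1).2 heq
    funext j
    exact vals hn f hf.1 hA hB hC j
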